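/- (New Bernstein inequality) Let a = (a₁,…,a_m) be a fixed nonzero real vector and Y₁,…,Y_m independent mean-zero random variables with E|Y_i| ≤ 2 and ‖Y_i‖_{ψ₁} ≤ K_i² where K_i ≥ 6/5. Let K = max_i K_i. Then there is an absolute constant c > 0 such that for every t ≥ 0, P(|Σ_i a_i Y_i| ≥ t) ≤ 2 exp(-c · min( t² / (Σ_i a_i² K_i² log K_i), t / (‖a‖_∞ K² log K) )). -/

import Mathlib

open MeasureTheory ProbabilityTheory Real

lemma exp_le_quad (x : ℝ) : Real.exp x ≤ 1 + x + x^2 * Real.exp |x| := by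
  have he1 : (1:ℝ) ≤ Real.exp |x| := Real.one_le_exp (abs_nonneg x)
  rcases le_or_gt 1 x with h | h
  · have hx : |x| = x := abs_of_nonneg (by linarith)
    rw [hx]
    nlinarith [mul_nonneg (show (0:ℝ) ≤ x^2 - 1 by nlinarith) (Real.exp_pos x).le]
  rcases le_or_gt x (-1) with h2 | h2
  · have : Real.exp x ≤ 1 := Real.exp_le_one_iff.mpr (by linarith)
    nlinarith [sq_nonneg x]
  · have habs : |x| ≤ 1 := abs_le.mpr ⟨by linarith, by linarith⟩
    have := Real.abs_exp_sub_one_sub_id_le habs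
    have h3 : Real.exp x - 1 - x ≤ x^2 := (abs_le.mp this).2
    nlinarith [sq_nonneg x]

lemma decay_le {L u v : ℝ} (hL : 0 < L) (h4 : 4*L ≤ u) (huv : u ≤ v) :
    v^2 ≤ u^2 * Real.exp ((v-u)/(2*L)) := by
  have hu : 0 < u := by linarith
  set s := (v-u)/(4*L) with hs
  have hsn : 0 ≤ s := div_nonneg (by linarith) (by linarith)
  have h1 : 1 + s ≤ Real.exp s := by linarith [Real.add_one_le_exp s]
  have h2 : Real.exp s * Real.exp s = Real.exp ((v-u)/(2*L)) := by
    have hL0 : L ≠ 0 := hL.ne'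
    rw [← Real.exp_add]; congr 1; rw [hs]; rw [← add_div]; rw [div_eq_div_iff (by linarith) (by linarith)]; ring
  have h3 : v ≤ u * (1 + s) := by
    have ha : 1 ≤ u/(4*L) := by rw [le_div_iff₀ (by linarith)]; linarith
    have hb : (v-u) * 1 ≤ (v-u) * (u/(4*L)) := by
      apply mul_le_mul_of_nonneg_left ha (by linarith)
    have hc : u * s = (v-u) * (u/(4*L)) := by rw [hs]; ring
    nlinarith
  have h5 : v^2 ≤ (u * (1+s))^2 := by nlinarith
  have h6 : (u * (1+s))^2 ≤ u^2 * (Real.exp s * Real.exp s) := by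
    nlinarith [mul_le_mul h1 h1 (by linarith : (0:ℝ) ≤ 1+s) (Real.exp_pos s).le, sq_nonneg u]
  rw [h2] at h6; linarith

lemma integrable_of_lintegral_le {Ω : Type} [MeasurableSpace Ω] {μ : Measure Ω} {f : Ω → ℝ}
    (hf : Measurable f) (h0 : ∀ ω, 0 ≤ f ω)
    (hb : ∫⁻ ω, ENNReal.ofReal (f ω) ∂μ ≤ 2) :
    Integrable f μ ∧ ∫ ω, f ω ∂μ ≤ 2 := by
  have hfin : HasFiniteIntegral f μ := by
    rw [hasFiniteIntegral_iff_ofReal (ae_of_all _ h0)]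
    exact lt_of_le_of_lt hb (by norm_num)
  have hi : Integrable f μ := ⟨hf.aestronglyMeasurable, hfin⟩
  refine ⟨hi, ?_⟩
  rw [integral_eq_lintegral_of_nonneg_ae (ae_of_all _ h0) hf.aestronglyMeasurable]
  have h2 : (∫⁻ ω, ENNReal.ofReal (f ω) ∂μ) ≤ ENNReal.ofReal 2 := by
    convert hb using 2; norm_num
  exact ENNReal.toReal_le_of_le_ofReal (by norm_num) h2

lemma exp_half_le_two : Real.exp (1/2 : ℝ) ≤ 2 := by
  have h1 := Real.add_one_le_exp (-(1/2:ℝ))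
  rw [Real.exp_neg] at h1
  have h2 : Real.exp (1/2:ℝ) * (Real.exp (1/2:ℝ))⁻¹ = 1 :=
    mul_inv_cancel₀ (Real.exp_pos _).ne'
  nlinarith [Real.exp_pos (1/2:ℝ)]

lemma log_ge_sixth {K : ℝ} (hK : 6/5 ≤ K) : 1/6 ≤ Real.log K := by
  rw [Real.le_log_iff_exp_le (by linarith)]
  have h1 := Real.add_one_le_exp (-(1/6:ℝ))
  rw [Real.exp_neg] at h1
  have h2 : Real.exp (1/6:ℝ) * (Real.exp (1/6:ℝ))⁻¹ = 1 :=
    mul_inv_cancel₀ (Real.exp_pos _).ne'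
  nlinarith [Real.exp_pos (1/6:ℝ)]

set_option maxHeartbeats 1000000 in
lemma mgf_one {Ω : Type} [MeasurableSpace Ω] (μ : Measure Ω) [IsProbabilityMeasure μ]
    (Y : Ω → ℝ) (K l : ℝ) (hK : 6/5 ≤ K)
    (hm : Measurable Y) (hint : Integrable Y μ) (hmean : ∫ ω, Y ω ∂μ = 0)
    (habs : ∫⁻ ω, ENNReal.ofReal |Y ω| ∂μ ≤ 2)
    (hexp : ∫⁻ ω, ENNReal.ofReal (Real.exp (|Y ω| / (2*K^2))) ∂μ ≤ 2)
    (hl : |l| ≤ 1/(128 * K^2 * Real.log K)) :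
    Integrable (fun ω => Real.exp (l * Y ω)) μ ∧
    mgf Y μ l ≤ Real.exp (8448 * l^2 * K^2 * Real.log K) := by
  have hK0 : (0:ℝ) < K := by linarith
  set g := Real.log K with hg
  have hg6 : 1/6 ≤ g := log_ge_sixth hK
  have hgpos : 0 < g := by linarith
  have hgK : g ≤ K^2 := by
    have := Real.log_le_sub_one_of_pos hK0
    nlinarith
  have hK2 : (1:ℝ) ≤ K^2 := by nlinarith
  set M := 8*K^2*(1+2*g) with hM
  have hMpos : 0 < M := by rw [hM]; positivity
  have hM64 : M ≤ 64*K^2*g := by nlinarith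
  have hlM : |l| * M ≤ 1/2 := by
    have h1 : |l| * M ≤ (1/(128*K^2*g)) * (64*K^2*g) :=
      mul_le_mul hl hM64 hMpos.le (by positivity)
    have h2 : (1/(128*K^2*g)) * (64*K^2*g) = 1/2 := by
      field_simp; ring
    linarith
  have hl2 : |l| ≤ 1/(4*K^2) := by
    refine le_trans hl ?_
    rw [div_le_div_iff₀ (by positivity) (by positivity)]
    nlinarith
  obtain ⟨hIabs, hEabs⟩ := integrable_of_lintegral_le hm.abs (fun ω => abs_nonneg _) habs
  obtain ⟨hIexp, hEexp⟩ := integrable_of_lintegral_le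
      (Real.measurable_exp.comp (hm.abs.div_const _)) (fun ω => (Real.exp_pos _).le) hexp
  set c2 := M^2 * Real.exp (-(M/(4*K^2))) with hc2
  have hc2pos : 0 < c2 := by rw [hc2]; positivity
  -- pointwise bound on Y^2 * exp(|l| |Y|)
  have hpoint : ∀ ω, (Y ω)^2 * Real.exp (|l| * |Y ω|) ≤
      2*M*|Y ω| + c2 * Real.exp (|Y ω|/(2*K^2)) := by
    intro ω
    rcases le_total (|Y ω|) M with hc | hc
    · have h1 : (Y ω)^2 ≤ M * |Y ω| := by
        rw [← sq_abs]; nlinarith [abs_nonneg (Y ω)]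
      have h2 : Real.exp (|l| * |Y ω|) ≤ 2 := by
        refine le_trans (le_trans (Real.exp_le_exp.mpr ?_) (Real.exp_le_exp.mpr hlM))
          exp_half_le_two
        exact mul_le_mul_of_nonneg_left hc (abs_nonneg l)
      have h3 : (Y ω)^2 * Real.exp (|l| * |Y ω|) ≤ 2*M*|Y ω| := by
        nlinarith [Real.exp_pos (|l| * |Y ω|), abs_nonneg (Y ω), sq_nonneg (Y ω)]
      nlinarith [Real.exp_pos (|Y ω|/(2*K^2))]
    · have hd : (|Y ω|)^2 ≤ M^2 * Real.exp ((|Y ω| - M)/(2*(2*K^2))) :=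
        decay_le (by positivity) (by nlinarith) hc
      have h2 : Real.exp (|l| * |Y ω|) ≤ Real.exp (|Y ω|/(4*K^2)) := by
        apply Real.exp_le_exp.mpr
        calc |l| * |Y ω| ≤ (1/(4*K^2)) * |Y ω| :=
              mul_le_mul_of_nonneg_right hl2 (abs_nonneg _)
          _ = |Y ω|/(4*K^2) := by ring
      have h3 : (Y ω)^2 * Real.exp (|l| * |Y ω|) ≤
          M^2 * (Real.exp ((|Y ω| - M)/(2*(2*K^2))) * Real.exp (|Y ω|/(4*K^2))) := by
        rw [← sq_abs]
        have := mul_le_mul hd h2 (Real.exp_pos _).le (by positivity)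
        calc |Y ω|^2 * Real.exp (|l| * |Y ω|)
            ≤ M^2 * Real.exp ((|Y ω| - M)/(2*(2*K^2))) * Real.exp (|Y ω|/(4*K^2)) := this
          _ = M^2 * (Real.exp ((|Y ω| - M)/(2*(2*K^2))) * Real.exp (|Y ω|/(4*K^2))) := by ring
      have h4 : Real.exp ((|Y ω| - M)/(2*(2*K^2))) * Real.exp (|Y ω|/(4*K^2)) =
          Real.exp (-(M/(4*K^2))) * Real.exp (|Y ω|/(2*K^2)) := by
        rw [← Real.exp_add, ← Real.exp_add]
        congr 1
        field_simp
        ring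
      rw [h4] at h3
      have h5 : M^2 * (Real.exp (-(M/(4*K^2))) * Real.exp (|Y ω|/(2*K^2))) =
          c2 * Real.exp (|Y ω|/(2*K^2)) := by rw [hc2]; ring
      rw [h5] at h3
      linarith [h3, mul_nonneg (mul_nonneg (by norm_num : (0:ℝ) ≤ 2) hMpos.le) (abs_nonneg (Y ω))]
  -- integrability of exp (l * Y)
  have hbound : ∀ ω, ‖Real.exp (l * Y ω)‖ ≤ Real.exp (|Y ω|/(2*K^2)) := by
    intro ω
    rw [Real.norm_eq_abs, Real.abs_exp]
    apply Real.exp_le_exp.mpr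
    calc l * Y ω ≤ |l * Y ω| := le_abs_self _
      _ = |l| * |Y ω| := abs_mul _ _
      _ ≤ (1/(4*K^2)) * |Y ω| := mul_le_mul_of_nonneg_right hl2 (abs_nonneg _)
      _ ≤ |Y ω|/(2*K^2) := by
          have h9 : (1/(4*K^2)) * |Y ω| ≤ (1/(2*K^2)) * |Y ω| := by
            apply mul_le_mul_of_nonneg_right _ (abs_nonneg _)
            rw [div_le_div_iff₀ (by positivity) (by positivity)]; nlinarith
          calc (1/(4*K^2)) * |Y ω| ≤ (1/(2*K^2)) * |Y ω| := h9
            _ = |Y ω|/(2*K^2) := by ring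
  have hIl : Integrable (fun ω => Real.exp (l * Y ω)) μ :=
    Integrable.mono' hIexp ((hm.const_mul l).exp).aestronglyMeasurable (ae_of_all _ hbound)
  refine ⟨hIl, ?_⟩
  have hIexp' : Integrable (fun ω => Real.exp (|Y ω|/(2*K^2))) μ := hIexp
  have hEexp' : ∫ ω, Real.exp (|Y ω|/(2*K^2)) ∂μ ≤ 2 := hEexp
  have hIa : Integrable (fun ω => 1 + l * Y ω) μ := (integrable_const 1).add (hint.const_mul l)
  have hIh2 : Integrable (fun ω => 2*M*|Y ω| + c2 * Real.exp (|Y ω|/(2*K^2))) μ :=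
    (hIabs.const_mul (2*M)).add (hIexp'.const_mul c2)
  have hIh : Integrable
      (fun ω => 1 + l * Y ω + l^2 * (2*M*|Y ω| + c2 * Real.exp (|Y ω|/(2*K^2)))) μ :=
    hIa.add (hIh2.const_mul (l^2))
  have hmono : mgf Y μ l ≤
      ∫ ω, (1 + l * Y ω + l^2 * (2*M*|Y ω| + c2 * Real.exp (|Y ω|/(2*K^2)))) ∂μ := by
    rw [mgf]
    apply integral_mono hIl hIh
    intro ω
    calc Real.exp (l * Y ω) ≤ 1 + l * Y ω + (l * Y ω)^2 * Real.exp |l * Y ω| := exp_le_quad _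
      _ ≤ _ := by
        have h1 : (l * Y ω)^2 * Real.exp |l * Y ω| =
            l^2 * ((Y ω)^2 * Real.exp (|l| * |Y ω|)) := by
          rw [abs_mul]; ring
        rw [h1]
        have := mul_le_mul_of_nonneg_left (hpoint ω) (sq_nonneg l)
        linarith
  rw [integral_add hIa (hIh2.const_mul (l^2)),
      integral_add (integrable_const 1) (hint.const_mul l),
      integral_const, integral_const_mul, integral_const_mul, hmean,
      integral_add (hIabs.const_mul (2*M)) (hIexp'.const_mul c2),
      integral_const_mul, integral_const_mul] at hmono
  simp only [measure_univ, probReal_univ, ENNReal.toReal_one, smul_eq_mul, one_mul, mul_one,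
    mul_zero, add_zero] at hmono
  have hsum : 2*M*(∫ ω, |Y ω| ∂μ) + c2*(∫ ω, Real.exp (|Y ω|/(2*K^2)) ∂μ) ≤ 4*M + 2*c2 := by
    have h1 := mul_le_mul_of_nonneg_left hEabs (show (0:ℝ) ≤ 2*M by positivity)
    have h2 := mul_le_mul_of_nonneg_left hEexp' hc2pos.le
    linarith
  have hMd : M/(4*K^2) = 2 + 4*g := by rw [hM]; field_simp; ring
  have hnum : 4*M + 2*c2 ≤ 8448 * K^2 * g := by
    have hK4 : Real.exp (-(M/(4*K^2))) ≤ (K^2*K^2)⁻¹ := by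
      rw [hMd]
      have h1 : Real.exp (-(2+4*g)) ≤ Real.exp (-(4*g)) := Real.exp_le_exp.mpr (by linarith)
      have h2 : Real.exp (-(4*g)) = (K^2*K^2)⁻¹ := by
        rw [Real.exp_neg]
        congr 1
        have h3 : (4:ℝ)*g = g+g+(g+g) := by ring
        rw [h3, Real.exp_add, Real.exp_add, hg, Real.exp_log hK0]
        ring
      rw [h2] at h1; exact h1
    have hc2b : c2 ≤ 64*(1+2*g)^2 := by
      have h4 : c2 ≤ M^2 * (K^2*K^2)⁻¹ :=
        mul_le_mul_of_nonneg_left hK4 (by positivity)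
      have h5 : M^2 * (K^2*K^2)⁻¹ = 64*(1+2*g)^2 := by
        rw [hM]; field_simp; ring
      rw [h5] at h4; exact h4
    nlinarith [hgpos, hK2, hgK, sq_nonneg (1+2*g)]
  calc mgf Y μ l ≤ 1 + l^2 * (8448*K^2*g) := by nlinarith [sq_nonneg l]
    _ ≤ Real.exp (8448 * l^2 * K^2 * g) := by
        have := Real.add_one_le_exp (8448 * l^2 * K^2 * g); linarith

lemma psi_extract {Ω : Type} [MeasurableSpace Ω] {μ : Measure Ω} {Y : Ω → ℝ} {K : ℝ}
    (hK : 0 < K)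
    (h : sInf {t : ENNReal | ∃ s : ℝ, 0 < s ∧ t = ENNReal.ofReal s ∧
      (∫⁻ ω, ENNReal.ofReal (Real.exp (|Y ω| ^ (1:ℝ) / s ^ (1:ℝ))) ∂μ) ≤ 2}
      ≤ ENNReal.ofReal (K^2)) :
    ∫⁻ ω, ENNReal.ofReal (Real.exp (|Y ω| / (2*K^2))) ∂μ ≤ 2 := by
  have hlt : sInf {t : ENNReal | ∃ s : ℝ, 0 < s ∧ t = ENNReal.ofReal s ∧
      (∫⁻ ω, ENNReal.ofReal (Real.exp (|Y ω| ^ (1:ℝ) / s ^ (1:ℝ))) ∂μ) ≤ 2}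
      < ENNReal.ofReal (2*K^2) := by
    apply lt_of_le_of_lt h
    rw [ENNReal.ofReal_lt_ofReal_iff (by positivity)]
    nlinarith
  obtain ⟨x, hxmem, hxlt⟩ := sInf_lt_iff.mp hlt
  obtain ⟨s, hs, rfl, hint⟩ := hxmem
  have hs2 : s ≤ 2*K^2 := by
    rw [ENNReal.ofReal_lt_ofReal_iff (by positivity)] at hxlt
    linarith
  simp only [Real.rpow_one] at hint
  refine le_trans (lintegral_mono fun ω => ?_) hint
  apply ENNReal.ofReal_le_ofReal
  apply Real.exp_le_exp.mpr
  gcongr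


lemma opt_lambda {V b t : ℝ} (hV : 0 < V) (hb : 0 < b) (ht : 0 ≤ t) :
    ∃ l : ℝ, 0 ≤ l ∧ l ≤ 1/(128*b) ∧
      -l*t + 8448*l^2*V ≤ -(1/33792) * min (t^2/V) (t/b) := by
  rcases le_total (t/(16896*V)) (1/(128*b)) with hle | hle
  · refine ⟨t/(16896*V), by positivity, hle, ?_⟩
    have he : -(t/(16896*V))*t + 8448*(t/(16896*V))^2*V = -(t^2/(33792*V)) := by
      field_simp; ring
    rw [he]
    have hmin : min (t^2/V) (t/b) ≤ t^2/V := min_le_left _ _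
    have h2 : (1/33792) * min (t^2/V) (t/b) ≤ (1/33792) * (t^2/V) := by linarith
    have h3 : (1/33792:ℝ) * (t^2/V) = t^2/(33792*V) := by field_simp; try ring
    linarith
  · refine ⟨1/(128*b), by positivity, le_refl _, ?_⟩
    have key : 16896*V ≤ 128*b*t := by
      have h0 := (div_le_div_iff₀ (by positivity) (by positivity)).mp hle
      nlinarith
    have h1 : 8448*(1/(128*b))^2*V ≤ t/(256*b) := by
      have e : 8448*(1/(128*b))^2*V = (8448*V)/(16384*b^2) := by
        field_simp; ring
      rw [e, div_le_div_iff₀ (by positivity) (by positivity)]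
      nlinarith [mul_le_mul_of_nonneg_right key hb.le]
    have h2 : -(1/(128*b))*t + t/(256*b) = -(t/(256*b)) := by field_simp; ring
    have hmin : min (t^2/V) (t/b) ≤ t/b := min_le_right _ _
    have h3 : (1/33792) * min (t^2/V) (t/b) ≤ (1/33792) * (t/b) := by linarith
    have h4 : (1/33792:ℝ) * (t/b) ≤ t/(256*b) := by
      have e : (1/33792:ℝ) * (t/b) = t/(33792*b) := by field_simp; try ring
      rw [e, div_le_div_iff₀ (by positivity) (by positivity)]
      nlinarith [mul_nonneg ht hb.le]
    linarith

set_option maxHeartbeats 1000000 in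
lemma one_side {Ω : Type} [MeasurableSpace Ω] (μ : Measure Ω) [IsProbabilityMeasure μ]
    {m : ℕ} (a : Fin m → ℝ) (Y : Fin m → Ω → ℝ) (Ks : Fin m → ℝ) (K amax : ℝ)
    (hm : ∀ i, Measurable (Y i))
    (hind : iIndepFun Y μ)
    (hint : ∀ i, Integrable (Y i) μ)
    (hmean : ∀ i, (∫ ω, Y i ω ∂μ) = 0)
    (habs : ∀ i, (∫⁻ ω, ENNReal.ofReal |Y i ω| ∂μ) ≤ 2)
    (hKs : ∀ i, (6/5 : ℝ) ≤ Ks i)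
    (hexp : ∀ i, ∫⁻ ω, ENNReal.ofReal (Real.exp (|Y i ω| / (2*(Ks i)^2))) ∂μ ≤ 2)
    (hKmem : ∀ i, Ks i ≤ K) (hK : 6/5 ≤ K)
    (hamax : ∀ i, |a i| ≤ amax) (hamax0 : 0 < amax)
    (hV : 0 < ∑ i, a i^2 * Ks i^2 * Real.log (Ks i))
    (t : ℝ) (ht : 0 ≤ t) :
    (μ {ω | t ≤ ∑ i, a i * Y i ω}).toReal ≤
      Real.exp (-(1/33792) * min (t^2 / ∑ i, a i^2 * Ks i^2 * Real.log (Ks i))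
        (t / (amax * K^2 * Real.log K))) := by
  have hKlog : 1/6 ≤ Real.log K := log_ge_sixth hK
  have hbpos : 0 < amax * K^2 * Real.log K := by
    apply mul_pos (mul_pos hamax0 (by positivity)) (by linarith)
  obtain ⟨l, hl0, hlb, hopt⟩ := opt_lambda hV hbpos ht
  have hli : ∀ i, |l * a i| ≤ 1/(128 * Ks i^2 * Real.log (Ks i)) := by
    intro i
    have hKi := hKs i
    have hlogi : 1/6 ≤ Real.log (Ks i) := log_ge_sixth hKi
    rw [abs_mul, abs_of_nonneg hl0]
    calc l * |a i| ≤ (1/(128*(amax * K^2 * Real.log K))) * amax := by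
          apply mul_le_mul hlb (hamax i) (abs_nonneg _) (by positivity)
      _ = 1/(128*K^2*Real.log K) := by
          field_simp
      _ ≤ 1/(128 * Ks i^2 * Real.log (Ks i)) := by
          apply one_div_le_one_div_of_le (by positivity)
          have h1 : Ks i^2 ≤ K^2 := by nlinarith [hKmem i, hKi]
          have h2 : Real.log (Ks i) ≤ Real.log K :=
            Real.log_le_log (by linarith) (hKmem i)
          nlinarith
  have hmgf1 := fun i => mgf_one μ (Y i) (Ks i) (l * a i) (hKs i) (hm i) (hint i)
      (hmean i) (habs i) (hexp i) (hli i)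
  set X : Fin m → Ω → ℝ := fun i ω => a i * Y i ω with hX
  have hmX : ∀ i, Measurable (X i) := fun i => (hm i).const_mul _
  have hindX : iIndepFun X μ :=
    hind.comp (fun i x => a i * x) (fun i => measurable_id.const_mul (a i))
  have hintX : ∀ i, Integrable (fun ω => Real.exp (l * X i ω)) μ := by
    intro i
    have e : (fun ω => Real.exp (l * X i ω)) = fun ω => Real.exp ((l * a i) * Y i ω) := by
      funext ω; rw [hX]; rw [← mul_assoc]
    rw [e]; exact (hmgf1 i).1
  have hS : Integrable (fun ω => Real.exp (l * (∑ i, X i) ω)) μ :=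
    hindX.integrable_exp_mul_sum hmX (fun i _ => hintX i)
  have hch := measure_ge_le_exp_mul_mgf (X := ∑ i, X i) (μ := μ) t hl0 hS
  have hset : {ω | t ≤ ∑ i, a i * Y i ω} = {ω | t ≤ (∑ i, X i) ω} := by
    ext ω; simp [hX]
  have hprod : mgf (∑ i, X i) μ l = ∏ i, mgf (X i) μ l := hindX.mgf_sum hmX Finset.univ
  have hXmgf : ∀ i, mgf (X i) μ l ≤
      Real.exp (8448*l^2*(a i^2 * Ks i^2 * Real.log (Ks i))) := by
    intro i
    have e : mgf (X i) μ l = mgf (Y i) μ (l * a i) := by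
      simp only [mgf]; congr 1; funext ω; rw [hX, ← mul_assoc]
    rw [e]
    refine le_trans (hmgf1 i).2 (Real.exp_le_exp.mpr (le_of_eq (by ring)))
  have hprodle : ∏ i, mgf (X i) μ l ≤
      ∏ i, Real.exp (8448*l^2*(a i^2 * Ks i^2 * Real.log (Ks i))) :=
    Finset.prod_le_prod (fun i _ => mgf_nonneg) (fun i _ => hXmgf i)
  rw [← Real.exp_sum] at hprodle
  have hsum : ∑ i, 8448*l^2*(a i^2 * Ks i^2 * Real.log (Ks i)) =
      8448*l^2*(∑ i, a i^2 * Ks i^2 * Real.log (Ks i)) := by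
    rw [Finset.mul_sum]
  rw [hsum] at hprodle
  calc (μ {ω | t ≤ ∑ i, a i * Y i ω}).toReal
      = (μ {ω | t ≤ (∑ i, X i) ω}).toReal := by rw [hset]
    _ ≤ Real.exp (-l * t) * mgf (∑ i, X i) μ l := hch
    _ ≤ Real.exp (-l * t) * Real.exp (8448*l^2*(∑ i, a i^2 * Ks i^2 * Real.log (Ks i))) := by
        apply mul_le_mul_of_nonneg_left _ (Real.exp_pos _).le
        rw [hprod]; exact hprodle
    _ = Real.exp (-l * t + 8448*l^2*(∑ i, a i^2 * Ks i^2 * Real.log (Ks i))) := by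
        rw [← Real.exp_add]
    _ ≤ Real.exp (-(1/33792) * min (t^2 / ∑ i, a i^2 * Ks i^2 * Real.log (Ks i))
        (t / (amax * K^2 * Real.log K))) := Real.exp_le_exp.mpr (by
          have := hopt; linarith)

/-- The ψ_α (Orlicz) norm of a real random variable, with the convention `sInf ∅ = ∞`. -/
noncomputable def psiNorm {Ω : Type*} [MeasurableSpace Ω] (μ : Measure Ω) (α : ℝ)
    (X : Ω → ℝ) : ENNReal :=
  sInf {t : ENNReal | ∃ s : ℝ, 0 < s ∧ t = ENNReal.ofReal s ∧
    (∫⁻ ω, ENNReal.ofReal (Real.exp (|X ω| ^ α / s ^ α)) ∂μ) ≤ 2}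

theorem new_bernstein : ∃ c : ℝ, 0 < c ∧
    ∀ (Ω : Type) (_ : MeasurableSpace Ω) (μ : Measure Ω) (_ : IsProbabilityMeasure μ)
      (m : ℕ) (a : Fin m → ℝ) (Y : Fin m → Ω → ℝ) (Ks : Fin m → ℝ) (K amax : ℝ),
      a ≠ 0 →
      (∀ i, Measurable (Y i)) →
      iIndepFun Y μ →
      (∀ i, Integrable (Y i) μ) →
      (∀ i, (∫ ω, Y i ω ∂μ) = 0) →
      (∀ i, (∫⁻ ω, ENNReal.ofReal |Y i ω| ∂μ) ≤ 2) →
      (∀ i, (6 / 5 : ℝ) ≤ Ks i) →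
      (∀ i, psiNorm μ 1 (Y i) ≤ ENNReal.ofReal (Ks i ^ 2)) →
      IsGreatest (Set.range Ks) K →
      IsGreatest (Set.range fun i => |a i|) amax →
      ∀ t : ℝ, 0 ≤ t →
        μ {ω | t ≤ |∑ i, a i * Y i ω|} ≤
          ENNReal.ofReal (2 * Real.exp (-c * min
            (t ^ 2 / ∑ i, a i ^ 2 * Ks i ^ 2 * Real.log (Ks i))
            (t / (amax * K ^ 2 * Real.log K)))) := by
  refine ⟨1/33792, by norm_num, ?_⟩
  intro Ω mΩ μ hPM m a Y Ks K amax ha hm hind hint hmean habs hKs hpsi hgK hga t ht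
  -- basic facts
  obtain ⟨j, haj0⟩ := Function.ne_iff.mp ha
  have haj : a j ≠ 0 := by simpa using haj0
  have hamax : ∀ i, |a i| ≤ amax := fun i => hga.2 (Set.mem_range_self i)
  have hamax0 : 0 < amax := lt_of_lt_of_le (abs_pos.mpr haj) (hamax j)
  obtain ⟨j0, hj0⟩ := hgK.1
  have hK : 6/5 ≤ K := hj0 ▸ hKs j0
  have hKmem : ∀ i, Ks i ≤ K := fun i => hgK.2 (Set.mem_range_self i)
  have hexp : ∀ i, ∫⁻ ω, ENNReal.ofReal (Real.exp (|Y i ω| / (2*(Ks i)^2))) ∂μ ≤ 2 :=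
    fun i => psi_extract (by linarith [hKs i]) (hpsi i)
  have hV : 0 < ∑ i, a i^2 * Ks i^2 * Real.log (Ks i) := by
    apply Finset.sum_pos'
    · intro i _
      have hli := log_ge_sixth (hKs i)
      exact mul_nonneg (mul_nonneg (sq_nonneg _) (sq_nonneg _)) (by linarith)
    · refine ⟨j, Finset.mem_univ j, ?_⟩
      have hlj := log_ge_sixth (hKs j)
      have h1 : 0 < a j^2 := by
        have h0 := abs_pos.mpr haj
        nlinarith [sq_abs (a j)]
      have h2 : 0 < Ks j^2 := by nlinarith [hKs j]
      exact mul_pos (mul_pos h1 h2) (by linarith)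
  have hE0 : (0:ℝ) ≤ Real.exp (-(1/33792) * min (t^2 / ∑ i, a i^2 * Ks i^2 * Real.log (Ks i))
    (t / (amax * K^2 * Real.log K))) := (Real.exp_pos _).le
  have h1 := one_side μ a Y Ks K amax hm hind hint hmean habs hKs hexp hKmem hK
    hamax hamax0 hV t ht
  have h2 : (μ {ω | t ≤ ∑ i, (-a i) * Y i ω}).toReal ≤
      Real.exp (-(1/33792) * min (t^2 / ∑ i, a i^2 * Ks i^2 * Real.log (Ks i))
        (t / (amax * K^2 * Real.log K))) := by
    have := one_side μ (fun i => -a i) Y Ks K amax hm hind hint hmean habs hKs hexp hKmem hK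
      (fun i => by rw [abs_neg]; exact hamax i) hamax0
      (by simpa only [neg_sq] using hV) t ht
    simpa only [neg_sq] using this
  have hsub : {ω | t ≤ |∑ i, a i * Y i ω|} ⊆
      {ω | t ≤ ∑ i, a i * Y i ω} ∪ {ω | t ≤ ∑ i, (-a i) * Y i ω} := by
    intro ω hω
    simp only [Set.mem_setOf_eq] at hω
    rcases le_abs.mp hω with h | h
    · exact Or.inl h
    · refine Or.inr ?_
      simp only [Set.mem_setOf_eq, neg_mul, Finset.sum_neg_distrib]
      exact h
  have hne1 : μ {ω | t ≤ ∑ i, a i * Y i ω} ≠ ⊤ := measure_ne_top _ _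
  have hne2 : μ {ω | t ≤ ∑ i, (-a i) * Y i ω} ≠ ⊤ := measure_ne_top _ _
  have hb1 : μ {ω | t ≤ ∑ i, a i * Y i ω} ≤
      ENNReal.ofReal (Real.exp (-(1/33792) * min (t^2 / ∑ i, a i^2 * Ks i^2 * Real.log (Ks i))
        (t / (amax * K^2 * Real.log K)))) :=
    (ENNReal.le_ofReal_iff_toReal_le hne1 hE0).mpr h1
  have hb2 : μ {ω | t ≤ ∑ i, (-a i) * Y i ω} ≤
      ENNReal.ofReal (Real.exp (-(1/33792) * min (t^2 / ∑ i, a i^2 * Ks i^2 * Real.log (Ks i))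
        (t / (amax * K^2 * Real.log K)))) :=
    (ENNReal.le_ofReal_iff_toReal_le hne2 hE0).mpr h2
  calc μ {ω | t ≤ |∑ i, a i * Y i ω|}
      ≤ μ ({ω | t ≤ ∑ i, a i * Y i ω} ∪ {ω | t ≤ ∑ i, (-a i) * Y i ω}) := measure_mono hsub
    _ ≤ μ {ω | t ≤ ∑ i, a i * Y i ω} + μ {ω | t ≤ ∑ i, (-a i) * Y i ω} := measure_union_le _ _
    _ ≤ _ := add_le_add hb1 hb2
    _ = _ := by
        rw [two_mul, ENNReal.ofReal_add hE0 hE0]
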